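/- Let G be a finite group, H ≤ G a subgroup, and p a prime. Then H is p-subnormal in G if and only if |HP| divides |G| for every Sylow p-subgroup P of G. -/

import Mathlib

open scoped Pointwise

/-- `H` is `p`-subnormal in `G` if `H ∩ P` is a Sylow `p`-subgroup of `H` for every
Sylow `p`-subgroup `P` of `G`. -/
def IsPSubnormal {G : Type*} [Group G] (p : ℕ) [Fact p.Prime] (H : Subgroup G) : Prop :=
  ∀ P : Sylow p G, ∃ Q : Sylow p H, (Q : Subgroup H) = ((P : Subgroup G) ⊓ H).subgroupOf H

/-- The image of a subgroup `H` in the quotient `G ⧸ K` (as a set) has cardinality equal to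
the index of `K.subgroupOf H` in `H`. -/
theorem card_image_quotient_aux {G : Type*} [Group G] (H K : Subgroup G) :
    Nat.card ((H : Set G).image ((↑) : G → G ⧸ K) : Set (G ⧸ K)) = (K.subgroupOf H).index := by
  rw [Subgroup.index]
  refine Nat.card_congr (Equiv.symm (Equiv.ofBijective ?_ ?_))
  · refine Quotient.lift (fun h : H =>
      (⟨QuotientGroup.mk (h : G), ⟨h, h.2, rfl⟩⟩ :
        ((H : Set G).image ((↑) : G → G ⧸ K)))) ?_
    intro a b hab
    have hab' : (a : H)⁻¹ * b ∈ K.subgroupOf H := QuotientGroup.leftRel_apply.mp hab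
    exact Subtype.ext ((QuotientGroup.eq).2 (by simpa using Subgroup.mem_subgroupOf.mp hab'))
  · constructor
    · refine Quotient.ind₂ ?_
      intro a b hab
      simp only [Quotient.lift_mk, Subtype.mk.injEq, QuotientGroup.eq] at hab
      exact Quotient.sound
        (QuotientGroup.leftRel_apply.2 (Subgroup.mem_subgroupOf.mpr (by simpa using QuotientGroup.eq.mp (congrArg Subtype.val hab))))
    · rintro ⟨x, h, hh, rfl⟩
      exact ⟨Quotient.mk _ ⟨h, hh⟩, rfl⟩

theorem isPSubnormal_aux {G : Type*} [Group G] [Finite G]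
    (H : Subgroup G) (p : ℕ) [Fact p.Prime] (P : Sylow p G) :
    (∃ Q : Sylow p H, (Q : Subgroup H) = ((P : Subgroup G) ⊓ H).subgroupOf H) ↔
      Nat.card ↥((H : Set G) * ((P : Subgroup G) : Set G)) ∣ Nat.card G := by
  set S : Subgroup H := ((P : Subgroup G)).subgroupOf H with hS
  have hinf : ((P : Subgroup G) ⊓ H).subgroupOf H = S := Subgroup.inf_subgroupOf_right _ _
  have hcard : Nat.card ↥((H : Set G) * ((P : Subgroup G) : Set G)) =
      Nat.card (P : Subgroup G) * S.index := by
    rw [Subgroup.card_mul_eq_card_subgroup_mul_card_quotient (P : Subgroup G) (H : Set G),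
      card_image_quotient_aux]
  have hG : Nat.card G = Nat.card (P : Subgroup G) * (P : Subgroup G).index :=
    (Subgroup.card_mul_index _).symm
  have hPpos : 0 < Nat.card (P : Subgroup G) := Nat.card_pos
  have hSpG : IsPGroup p S := P.2.comap_subtype
  have hPnd : ¬ p ∣ (P : Subgroup G).index := P.not_dvd_index
  rw [hinf, hcard, hG, mul_dvd_mul_iff_left hPpos.ne']
  constructor
  · rintro ⟨Q, hQ⟩
    have hnd : ¬ p ∣ S.index := by rw [← hQ]; exact Q.not_dvd_index
    have hSdvd : S.index ∣ Nat.card G := (Subgroup.index_dvd_card S).trans H.card_subgroup_dvd_card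
    rw [hG, P.card_eq_multiplicity] at hSdvd
    have hcop : Nat.Coprime S.index (p ^ (Nat.card G).factorization p) :=
      Nat.Coprime.pow_right _ (((Fact.out : p.Prime).coprime_iff_not_dvd.mpr hnd).symm)
    exact hcop.dvd_of_dvd_mul_left hSdvd
  · intro hdvd
    have hnd : ¬ p ∣ S.index := fun hp => hPnd (hp.trans hdvd)
    obtain ⟨Q, hQ⟩ := hSpG.exists_le_sylow
    refine ⟨Q, ?_⟩
    have h1 : S.relIndex Q * (Q : Subgroup H).index = S.index := Subgroup.relIndex_mul_index hQ
    have h2 : S.relIndex Q ∣ Nat.card (Q : Subgroup H) := Subgroup.index_dvd_card _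
    obtain ⟨k, hk⟩ := Q.2.exists_card_eq
    rw [hk] at h2
    obtain ⟨j, hj, hrel⟩ := (Nat.dvd_prime_pow Fact.out).mp h2
    have hrel1 : S.relIndex Q = 1 := by
      rcases Nat.eq_zero_or_pos j with h0 | hpos
      · simpa [h0] using hrel
      · exact absurd (h1 ▸ Dvd.dvd.mul_right (hrel ▸ dvd_pow_self p hpos.ne') _) hnd
    exact le_antisymm (Subgroup.relIndex_eq_one.mp hrel1) hQ

/-- In a finite group `G`, a subgroup `H` is `p`-subnormal iff the cardinality of the
product set `HP` divides `|G|` for every Sylow `p`-subgroup `P` of `G`. -/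
theorem isPSubnormal_iff_card_mul_dvd {G : Type*} [Group G] [Finite G]
    (H : Subgroup G) (p : ℕ) [Fact p.Prime] :
    IsPSubnormal p H ↔
      ∀ P : Sylow p G, Nat.card ↥((H : Set G) * ((P : Subgroup G) : Set G)) ∣ Nat.card G := by
  exact forall_congr' fun P => isPSubnormal_aux H p P
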